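/- Let D0 and D1 be probability mass functions on a countable set X. Then JSD(D0 ‖ D1) ≥ (1/4) · ∑_x (D1(x) − D0(x))² / (D0(x) + D1(x)), where the sum ranges over all x with D0(x) + D1(x) > 0. -/

import Mathlib

private lemma jsd_hasDerivAt_g (x : ℝ) (h1 : -1 < x) (h2 : x < 1) :
    HasDerivAt (fun t : ℝ => Real.log (1+t) - Real.log (1-t) - 2*t)
      (1/(1+x) + 1/(1-x) - 2) x := by
  have hx1 : (1:ℝ) + x ≠ 0 := by linarith
  have hx2 : (1:ℝ) - x ≠ 0 := by linarith
  have d1 : HasDerivAt (fun t : ℝ => Real.log (1+t)) (1/(1+x)) x := by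
    simpa using ((hasDerivAt_id x).const_add 1).log hx1
  have d2 : HasDerivAt (fun t : ℝ => Real.log (1-t)) (-(1/(1-x))) x := by
    simpa [neg_div] using ((hasDerivAt_id x).const_sub 1).log hx2
  have d3 : HasDerivAt (fun t : ℝ => 2*t) 2 x := by
    simpa using (hasDerivAt_id x).const_mul 2
  have := (d1.sub d2).sub d3
  exact this.congr_deriv (by ring)

private lemma jsd_g_nonneg {t : ℝ} (ht0 : 0 ≤ t) (ht1 : t < 1) :
    0 ≤ Real.log (1+t) - Real.log (1-t) - 2*t := by
  set f : ℝ → ℝ := fun t => Real.log (1+t) - Real.log (1-t) - 2*t with hf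
  have hdiff : ∀ x ∈ Set.Icc (0:ℝ) t, HasDerivAt f (1/(1+x) + 1/(1-x) - 2) x := by
    intro x hx
    exact jsd_hasDerivAt_g x (by linarith [hx.1]) (by linarith [hx.2])
  have hmono : MonotoneOn f (Set.Icc (0:ℝ) t) := by
    apply monotoneOn_of_deriv_nonneg (convex_Icc 0 t)
    · exact fun x hx => ((hdiff x hx).differentiableAt).continuousAt.continuousWithinAt
    · intro x hx
      rw [interior_Icc] at hx
      exact ((hdiff x ⟨le_of_lt hx.1, le_of_lt hx.2⟩).differentiableAt).differentiableWithinAt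
    · intro x hx
      rw [interior_Icc] at hx
      rw [(hdiff x ⟨le_of_lt hx.1, le_of_lt hx.2⟩).deriv]
      have hx1 : (0:ℝ) < 1 + x := by linarith [hx.1]
      have hx2 : (0:ℝ) < 1 - x := by linarith [hx.2]
      have : 1/(1+x) + 1/(1-x) - 2 = 2*x^2/((1+x)*(1-x)) := by field_simp; ring
      rw [this]; positivity
  have := hmono ⟨le_refl 0, ht0⟩ ⟨ht0, le_refl t⟩ ht0
  simpa [hf] using this

private lemma jsd_key {t : ℝ} (ht0 : 0 ≤ t) (ht1 : t ≤ 1) :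
    t^2 ≤ (1+t)*Real.log (1+t) + (1-t)*Real.log (1-t) := by
  rcases eq_or_lt_of_le ht1 with rfl | ht1
  · have h2 := Real.log_two_gt_d9
    norm_num
    nlinarith
  set H : ℝ → ℝ := fun x => (1+x)*Real.log (1+x) + (1-x)*Real.log (1-x) - x^2 with hH
  have hdiff : ∀ x ∈ Set.Icc (0:ℝ) t, HasDerivAt H
      (Real.log (1+x) - Real.log (1-x) - 2*x) x := by
    intro x hx
    have hx1 : (0:ℝ) < 1 + x := by linarith [hx.1]
    have hx2 : (0:ℝ) < 1 - x := by linarith [hx.2, ht1]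
    have d1 : HasDerivAt (fun y : ℝ => Real.log (1+y)) (1/(1+x)) x := by
      simpa using ((hasDerivAt_id x).const_add 1).log hx1.ne'
    have d2 : HasDerivAt (fun y : ℝ => Real.log (1-y)) (-(1/(1-x))) x := by
      simpa [neg_div] using ((hasDerivAt_id x).const_sub 1).log hx2.ne'
    have p1 : HasDerivAt (fun y : ℝ => (1+y)*Real.log (1+y))
        (1 * Real.log (1+x) + (1+x) * (1/(1+x))) x :=
      (((hasDerivAt_id x).const_add 1)).mul d1
    have p2 : HasDerivAt (fun y : ℝ => (1-y)*Real.log (1-y))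
        ((-1) * Real.log (1-x) + (1-x) * (-(1/(1-x)))) x :=
      (((hasDerivAt_id x).const_sub 1)).mul d2
    have p3 : HasDerivAt (fun y : ℝ => y^2) (2*x) x := by
      simpa using (hasDerivAt_pow 2 x)
    have := (p1.add p2).sub p3
    exact this.congr_deriv (by field_simp; ring)
  have hmono : MonotoneOn H (Set.Icc (0:ℝ) t) := by
    apply monotoneOn_of_deriv_nonneg (convex_Icc 0 t)
    · exact fun x hx => ((hdiff x hx).differentiableAt).continuousAt.continuousWithinAt
    · intro x hx
      rw [interior_Icc] at hx
      exact ((hdiff x ⟨le_of_lt hx.1, le_of_lt hx.2⟩).differentiableAt).differentiableWithinAt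
    · intro x hx
      rw [interior_Icc] at hx
      rw [(hdiff x ⟨le_of_lt hx.1, le_of_lt hx.2⟩).deriv]
      exact jsd_g_nonneg (le_of_lt hx.1) (by linarith [hx.2])
  have := hmono ⟨le_refl 0, ht0⟩ ⟨ht0, le_refl t⟩ ht0
  have h0 : H 0 = 0 := by simp [hH]
  rw [h0] at this
  simp only [hH] at this
  linarith

private lemma jsd_pt' (a b : ℝ) (ha : 0 ≤ a) (hab : a ≤ b) (hs : 0 < a + b) :
    (1/4) * ((b-a)^2/(a+b)) ≤
      (1/2) * (a * Real.log (a / ((a+b)/2))) + (1/2) * (b * Real.log (b / ((a+b)/2))) := by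
  set t : ℝ := (b-a)/(a+b) with htdef
  have ht0 : 0 ≤ t := div_nonneg (by linarith) hs.le
  have ht1 : t ≤ 1 := by rw [div_le_one hs]; linarith
  have h1t : b / ((a+b)/2) = 1 + t := by rw [htdef]; field_simp; ring
  have h2t : a / ((a+b)/2) = 1 - t := by rw [htdef]; field_simp; ring
  have hb' : (a+b)/2 * (1+t) = b := by rw [htdef]; field_simp; ring
  have ha' : (a+b)/2 * (1-t) = a := by rw [htdef]; field_simp; ring
  calc (1/4) * ((b-a)^2/(a+b)) = (a+b)/4 * t^2 := by
        rw [htdef]; field_simp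
    _ ≤ (a+b)/4 * ((1+t)*Real.log (1+t) + (1-t)*Real.log (1-t)) :=
        mul_le_mul_of_nonneg_left (jsd_key ht0 ht1) (by positivity)
    _ = (1/2) * (a * Real.log (a / ((a+b)/2))) + (1/2) * (b * Real.log (b / ((a+b)/2))) := by
        rw [h1t, h2t]
        linear_combination (Real.log (1+t)/2) * hb' + (Real.log (1-t)/2) * ha'

private lemma jsd_pt (a b : ℝ) (ha : 0 ≤ a) (hb : 0 ≤ b) :
    (1/4) * ((b-a)^2/(a+b)) ≤
      (1/2) * (a * Real.log (a / ((a+b)/2))) + (1/2) * (b * Real.log (b / ((a+b)/2))) := by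
  rcases eq_or_lt_of_le (by linarith : (0:ℝ) ≤ a + b) with h | hs
  · have ha0 : a = 0 := by linarith
    have hb0 : b = 0 := by linarith
    simp [ha0, hb0]
  rcases le_total a b with h | h
  · exact jsd_pt' a b ha h hs
  · have := jsd_pt' b a hb h (by linarith)
    have e1 : (a-b)^2 = (b-a)^2 := by ring
    rw [e1, add_comm b a] at this
    linarith

private lemma jsd_term_abs_bound (a b : ℝ) (ha : 0 ≤ a) (hb : 0 ≤ b) :
    |a * Real.log (a / ((a+b)/2))| ≤ a * Real.log 2 + (a + b) := by
  have hlog2 : (0:ℝ) ≤ Real.log 2 := Real.log_nonneg (by norm_num)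
  rcases eq_or_lt_of_le (by linarith : (0:ℝ) ≤ a + b) with h | hs
  · have ha0 : a = 0 := by linarith
    simp [ha0]
    linarith
  rcases eq_or_lt_of_le ha with h | ha'
  · rw [← h]
    simp
    positivity
  have hq : 0 < a / ((a+b)/2) := by positivity
  have hupper : a * Real.log (a / ((a+b)/2)) ≤ a * Real.log 2 := by
    apply mul_le_mul_of_nonneg_left _ ha
    apply Real.log_le_log hq
    rw [div_le_iff₀ (by linarith : (0:ℝ) < (a+b)/2)]
    linarith
  have hlow : a - (a+b)/2 ≤ a * Real.log (a / ((a+b)/2)) := by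
    have h1 := Real.one_sub_inv_le_log_of_pos hq
    have h2 : a * (1 - (a / ((a+b)/2))⁻¹) = a - (a+b)/2 := by
      field_simp
    calc a - (a+b)/2 = a * (1 - (a / ((a+b)/2))⁻¹) := h2.symm
      _ ≤ a * Real.log (a / ((a+b)/2)) := mul_le_mul_of_nonneg_left h1 ha
  rw [abs_le]
  constructor
  · nlinarith
  · linarith

/-- For probability mass functions `D0`, `D1` on a countable set `X`,
`JSD(D0 ‖ D1) ≥ (1/4) · ∑_x (D1(x) − D0(x))² / (D0(x) + D1(x))`
(terms with `D0 x + D1 x = 0` contribute `0`, as both numerator and denominator vanish). -/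
theorem jsd_ge_quarter_chi_like_sum {X : Type*} [Countable X]
    (D0 D1 : X → ℝ)
    (h0nn : ∀ x, 0 ≤ D0 x) (h1nn : ∀ x, 0 ≤ D1 x)
    (h0sum : HasSum D0 1) (h1sum : HasSum D1 1) :
    (1/2) * ∑' x, D0 x * Real.log (D0 x / ((D0 x + D1 x) / 2))
      + (1/2) * ∑' x, D1 x * Real.log (D1 x / ((D0 x + D1 x) / 2))
      ≥ (1/4) * ∑' x, (D1 x - D0 x) ^ 2 / (D0 x + D1 x) := by
  have hS0 : Summable D0 := h0sum.summable
  have hS1 : Summable D1 := h1sum.summable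
  have hSs : Summable (fun x => D0 x + D1 x) := hS0.add hS1
  have hbound : Summable (fun x => D0 x * Real.log 2 + (D0 x + D1 x)) :=
    (hS0.mul_right _).add hSs
  have hbound' : Summable (fun x => D1 x * Real.log 2 + (D0 x + D1 x)) :=
    (hS1.mul_right _).add hSs
  have hf0 : Summable (fun x => D0 x * Real.log (D0 x / ((D0 x + D1 x) / 2))) := by
    apply Summable.of_abs
    apply Summable.of_nonneg_of_le (fun x => abs_nonneg _) _ hbound
    intro x
    exact jsd_term_abs_bound (D0 x) (D1 x) (h0nn x) (h1nn x)
  have hf1 : Summable (fun x => D1 x * Real.log (D1 x / ((D0 x + D1 x) / 2))) := by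
    apply Summable.of_abs
    apply Summable.of_nonneg_of_le (fun x => abs_nonneg _) _ hbound'
    intro x
    have := jsd_term_abs_bound (D1 x) (D0 x) (h1nn x) (h0nn x)
    simpa [add_comm (D1 x) (D0 x)] using this
  have hG : Summable (fun x => (D1 x - D0 x) ^ 2 / (D0 x + D1 x)) := by
    apply Summable.of_nonneg_of_le _ _ hSs
    · intro x
      exact div_nonneg (sq_nonneg _) (by linarith [h0nn x, h1nn x])
    · intro x
      rcases eq_or_lt_of_le (by linarith [h0nn x, h1nn x] : (0:ℝ) ≤ D0 x + D1 x) with h | hs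
      · rw [← h]
        simp
      · rw [div_le_iff₀ hs]
        nlinarith [h0nn x, h1nn x]
  rw [ge_iff_le, ← tsum_mul_left, ← tsum_mul_left, ← tsum_mul_left,
    ← Summable.tsum_add (hf0.mul_left _) (hf1.mul_left _)]
  apply Summable.tsum_le_tsum _ (hG.mul_left _) ((hf0.mul_left _).add (hf1.mul_left _))
  intro x
  exact jsd_pt (D0 x) (D1 x) (h0nn x) (h1nn x)
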